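/- Let K_1, K_2 ⊂ ℝ be linked Cantor sets (i.e., the interiors of their convex hulls intersect but neither convex hull's interior is contained in the other's) satisfying τ(K_1)·τ(K_2) ≥ 1, where τ denotes Newhouse thickness. Then K_1 ∩ K_2 ≠ ∅. -/

import Mathlib

open Set

/-- A Cantor set: a non-empty compact, perfect, totally disconnected subset of ℝ. -/
def IsCantorSet (K : Set ℝ) : Prop :=
  K.Nonempty ∧ IsCompact K ∧ Perfect K ∧ IsTotallyDisconnected K

/-- `(a,b)` is a bounded gap of `K`: a bounded connected component of the complement. -/
def IsGap (K : Set ℝ) (a b : ℝ) : Prop :=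
  a < b ∧ a ∈ K ∧ b ∈ K ∧ Set.Ioo a b ∩ K = ∅

/-- Left endpoints of gaps to the right of `u` of length at least `ℓ` (or the right extreme of `K`). -/
def rightTargets (K : Set ℝ) (u ℓ : ℝ) : Set ℝ :=
  {a | u < a ∧ ((∃ b, IsGap K a b ∧ ℓ ≤ b - a) ∨ a = sSup K)}

/-- Right endpoints of gaps to the left of `u` of length at least `ℓ` (or the left extreme of `K`). -/
def leftTargets (K : Set ℝ) (u ℓ : ℝ) : Set ℝ :=
  {b | b < u ∧ ((∃ a, IsGap K a b ∧ ℓ ≤ b - a) ∨ b = sInf K)}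

/-- The set of bridge/gap ratios of `K` at endpoints of bounded gaps. -/
def thicknessValues (K : Set ℝ) : Set ℝ :=
  {r | ∃ a b, IsGap K a b ∧
    (r = (sInf (rightTargets K b (b - a)) - b) / (b - a) ∨
     r = (a - sSup (leftTargets K a (b - a))) / (b - a))}

/-- Newhouse thickness of `K`. -/
noncomputable def thickness (K : Set ℝ) : ℝ := sInf (thicknessValues K)

def rightTargetsEps (K : Set ℝ) (ε u ℓ : ℝ) : Set ℝ :=
  {a | u < a ∧ ((∃ b, IsGap K a b ∧ (1 - ε) * ℓ < b - a) ∨ a = sSup K)}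

def leftTargetsEps (K : Set ℝ) (ε u ℓ : ℝ) : Set ℝ :=
  {b | b < u ∧ ((∃ a, IsGap K a b ∧ (1 - ε) * ℓ < b - a) ∨ b = sInf K)}

def epsThicknessValues (K : Set ℝ) (ε : ℝ) : Set ℝ :=
  {r | ∃ a b, IsGap K a b ∧
    (r = (sInf (rightTargetsEps K ε b (b - a)) - b) / (b - a) ∨
     r = (a - sSup (leftTargetsEps K ε a (b - a))) / (b - a))}

/-- The `ε`-thickness of `K`. -/
noncomputable def epsThickness (K : Set ℝ) (ε : ℝ) : ℝ := sInf (epsThicknessValues K ε)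

/-- Two bounded subsets of ℝ are linked if the interiors of their convex hulls intersect
but neither is contained in the other. -/
def Linked (K1 K2 : Set ℝ) : Prop :=
  (Set.Ioo (sInf K1) (sSup K1) ∩ Set.Ioo (sInf K2) (sSup K2)).Nonempty ∧
  ¬ Set.Ioo (sInf K1) (sSup K1) ⊆ Set.Ioo (sInf K2) (sSup K2) ∧
  ¬ Set.Ioo (sInf K2) (sSup K2) ⊆ Set.Ioo (sInf K1) (sSup K1)

/-- The standard middle-thirds Cantor set. -/
noncomputable def cantorThirds : Set ℝ :=
  ⋂ n : ℕ,
    (fun S : Set ℝ => (fun x : ℝ => x / 3) '' S ∪ (fun x : ℝ => x / 3 + 2/3) '' S)^[n]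
      (Set.Icc 0 1)

/-- A section of the middle-thirds Cantor set: a scaled translated copy of it sitting inside it. -/
def IsCantorSection (S : Set ℝ) : Prop :=
  ∃ (n : ℕ) (a : ℝ), S = (fun x : ℝ => a + x / 3 ^ n) '' cantorThirds ∧ S ⊆ cantorThirds

/-- The open wedge at `x`. -/
def Wedge (x : ℝ × ℝ) : Set (ℝ × ℝ) :=
  {y | y.2 - x.2 < y.1 - x.1 ∧ y.1 - x.1 < 3 * (y.2 - x.2)}


section NGLaux

open Filter Topology

variable {K X Y : Set ℝ}

lemma NGL_sInf_lt_sSup (hK : IsCantorSet K) : sInf K < sSup K := by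
  obtain ⟨⟨x, hx⟩, hc, hp, -⟩ := hK
  have hacc := hp.acc x hx
  rw [accPt_iff_nhds] at hacc
  obtain ⟨y, ⟨-, hyK⟩, hyx⟩ := hacc Set.univ Filter.univ_mem
  rcases lt_or_gt_of_ne hyx with h | h
  · exact lt_of_le_of_lt (csInf_le hc.bddBelow hyK)
      (lt_of_lt_of_le h (le_csSup hc.bddAbove hx))
  · exact lt_of_le_of_lt (csInf_le hc.bddBelow hx)
      (lt_of_lt_of_le h (le_csSup hc.bddAbove hyK))

lemma NGL_gap_lt_sSup (hK : IsCantorSet K) {a b : ℝ} (hg : IsGap K a b) : b < sSup K := by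
  obtain ⟨-, hc, hp, -⟩ := hK
  have hacc := hp.acc b hg.2.2.1
  rw [accPt_iff_nhds] at hacc
  obtain ⟨y, ⟨hy1, hy2⟩, hyb⟩ := hacc (Set.Ioo a (b + 1)) (Ioo_mem_nhds hg.1 (lt_add_one b))
  have hby : b < y := by
    rcases lt_trichotomy y b with h | h | h
    · exact absurd (show y ∈ Set.Ioo a b ∩ K from ⟨⟨hy1.1, h⟩, hy2⟩)
        (by rw [hg.2.2.2]; exact notMem_empty y)
    · exact absurd h hyb
    · exact h
  exact lt_of_lt_of_le hby (le_csSup hc.bddAbove hy2)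

lemma NGL_sInf_lt_gap (hK : IsCantorSet K) {a b : ℝ} (hg : IsGap K a b) : sInf K < a := by
  obtain ⟨-, hc, hp, -⟩ := hK
  have hacc := hp.acc a hg.2.1
  rw [accPt_iff_nhds] at hacc
  obtain ⟨y, ⟨hy1, hy2⟩, hya⟩ := hacc (Set.Ioo (a - 1) b) (Ioo_mem_nhds (by linarith) hg.1)
  have hya' : y < a := by
    rcases lt_trichotomy y a with h | h | h
    · exact h
    · exact absurd h hya
    · exact absurd (show y ∈ Set.Ioo a b ∩ K from ⟨⟨h, hy1.2⟩, hy2⟩)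
        (by rw [hg.2.2.2]; exact notMem_empty y)
  exact lt_of_le_of_lt (csInf_le hc.bddBelow hy2) hya'

lemma NGL_gap_not_adjacent (hK : IsCantorSet K) {a b c : ℝ}
    (h1 : IsGap K a b) (h2 : IsGap K b c) : False := by
  obtain ⟨-, -, hp, -⟩ := hK
  have hacc := hp.acc b h1.2.2.1
  rw [accPt_iff_nhds] at hacc
  obtain ⟨y, ⟨⟨hya, hyc⟩, hy2⟩, hyb⟩ := hacc (Set.Ioo a c) (Ioo_mem_nhds h1.1 h2.1)
  rcases lt_trichotomy y b with h | h | h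
  · exact (Set.eq_empty_iff_forall_notMem.1 h1.2.2.2) y ⟨⟨hya, h⟩, hy2⟩
  · exact hyb h
  · exact (Set.eq_empty_iff_forall_notMem.1 h2.2.2.2) y ⟨⟨h, hyc⟩, hy2⟩

lemma NGL_gap_le {a b a' b' : ℝ} (h1 : IsGap K a b) (h2 : IsGap K a' b')
    (h : a < a') : b ≤ a' := by
  by_contra hc
  exact (Set.eq_empty_iff_forall_notMem.1 h1.2.2.2) a' ⟨⟨h, not_le.1 hc⟩, h2.2.1⟩

lemma NGL_gap_right_unique {a b b' : ℝ} (h1 : IsGap K a b) (h2 : IsGap K a b') : b = b' := by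
  rcases lt_trichotomy b b' with h | h | h
  · exact ((Set.eq_empty_iff_forall_notMem.1 h2.2.2.2) b ⟨⟨h1.1, h⟩, h1.2.2.1⟩).elim
  · exact h
  · exact ((Set.eq_empty_iff_forall_notMem.1 h1.2.2.2) b' ⟨⟨h2.1, h⟩, h2.2.2.1⟩).elim

lemma NGL_mem_gap_of_not_mem (hK : IsCantorSet K) {x : ℝ}
    (hx : x ∉ K) (h1 : sInf K < x) (h2 : x < sSup K) :
    ∃ a b, IsGap K a b ∧ a < x ∧ x < b := by
  obtain ⟨hne, hcomp, -, -⟩ := hK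
  have hIic : (K ∩ Set.Iic x).Nonempty := ⟨sInf K, hcomp.sInf_mem hne, le_of_lt h1⟩
  have hIci : (K ∩ Set.Ici x).Nonempty := ⟨sSup K, hcomp.sSup_mem hne, le_of_lt h2⟩
  have hc1 : IsCompact (K ∩ Set.Iic x) := hcomp.inter_right isClosed_Iic
  have hc2 : IsCompact (K ∩ Set.Ici x) := hcomp.inter_right isClosed_Ici
  have hamem := hc1.sSup_mem hIic
  have hbmem := hc2.sInf_mem hIci
  have hax : sSup (K ∩ Set.Iic x) < x :=
    lt_of_le_of_ne hamem.2 (fun h => absurd (h ▸ hamem.1) hx)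
  have hxb : x < sInf (K ∩ Set.Ici x) :=
    lt_of_le_of_ne hbmem.2 (fun h => absurd (h.symm ▸ hbmem.1) hx)
  set a := sSup (K ∩ Set.Iic x) with ha
  set b := sInf (K ∩ Set.Ici x) with hb
  refine ⟨a, b, ⟨lt_trans hax hxb, hamem.1, hbmem.1, ?_⟩, hax, hxb⟩
  rw [Set.eq_empty_iff_forall_notMem]
  rintro y ⟨⟨hay, hyb⟩, hyK⟩
  rcases le_or_gt y x with h | h
  · exact absurd (le_csSup hc1.bddAbove ⟨hyK, h⟩) (not_le.2 hay)
  · exact absurd (csInf_le hc2.bddBelow ⟨hyK, h.le⟩) (not_le.2 hyb)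

lemma NGL_rightTargets_bddBelow (K : Set ℝ) (u l : ℝ) : BddBelow (rightTargets K u l) :=
  ⟨u, fun _ hx => hx.1.le⟩

lemma NGL_leftTargets_bddAbove (K : Set ℝ) (u l : ℝ) : BddAbove (leftTargets K u l) :=
  ⟨u, fun _ hx => hx.1.le⟩

lemma NGL_sSup_mem_rightTargets (hK : IsCantorSet K) {a b : ℝ} (hg : IsGap K a b) :
    sSup K ∈ rightTargets K b (b - a) :=
  ⟨NGL_gap_lt_sSup hK hg, Or.inr rfl⟩

lemma NGL_sInf_mem_leftTargets (hK : IsCantorSet K) {a b : ℝ} (hg : IsGap K a b) :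
    sInf K ∈ leftTargets K a (b - a) :=
  ⟨NGL_sInf_lt_gap hK hg, Or.inr rfl⟩

lemma NGL_thicknessValues_nonneg (hK : IsCantorSet K) : ∀ r ∈ thicknessValues K, 0 ≤ r := by
  rintro r ⟨a, b, hg, hr | hr⟩
  · have hb : b ≤ sInf (rightTargets K b (b - a)) :=
      le_csInf ⟨sSup K, NGL_sSup_mem_rightTargets hK hg⟩ (fun x hx => hx.1.le)
    rw [hr]
    exact div_nonneg (by linarith) (by linarith [hg.1])
  · have ha : sSup (leftTargets K a (b - a)) ≤ a :=
      csSup_le ⟨sInf K, NGL_sInf_mem_leftTargets hK hg⟩ (fun x hx => hx.1.le)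
    rw [hr]
    exact div_nonneg (by linarith) (by linarith [hg.1])

lemma NGL_thickness_nonneg (hK : IsCantorSet K) : 0 ≤ thickness K :=
  Real.sInf_nonneg (NGL_thicknessValues_nonneg hK)

lemma NGL_thickness_right (hK : IsCantorSet K) {a b : ℝ} (hg : IsGap K a b) :
    thickness K * (b - a) ≤ sInf (rightTargets K b (b - a)) - b := by
  have hmem : (sInf (rightTargets K b (b - a)) - b) / (b - a) ∈ thicknessValues K :=
    ⟨a, b, hg, Or.inl rfl⟩
  have h : thickness K ≤ (sInf (rightTargets K b (b - a)) - b) / (b - a) :=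
    csInf_le ⟨0, fun r hr => NGL_thicknessValues_nonneg hK r hr⟩ hmem
  exact (le_div_iff₀ (sub_pos.2 hg.1)).1 h

lemma NGL_thickness_left (hK : IsCantorSet K) {a b : ℝ} (hg : IsGap K a b) :
    thickness K * (b - a) ≤ a - sSup (leftTargets K a (b - a)) := by
  have hmem : (a - sSup (leftTargets K a (b - a))) / (b - a) ∈ thicknessValues K :=
    ⟨a, b, hg, Or.inr rfl⟩
  have h : thickness K ≤ (a - sSup (leftTargets K a (b - a))) / (b - a) :=
    csInf_le ⟨0, fun r hr => NGL_thicknessValues_nonneg hK r hr⟩ hmem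
  exact (le_div_iff₀ (sub_pos.2 hg.1)).1 h

/-- The key step lemma. -/
lemma NGL_step (hX : IsCantorSet X) (hY : IsCantorSet Y)
    (hτ : 1 ≤ thickness X * thickness Y)
    {x1 x2 y1 y2 : ℝ} (hgx : IsGap X x1 x2) (hgy : IsGap Y y1 y2)
    (o1 : x1 < y1) (o2 : y1 < x2) (o3 : x2 < y2) :
    (X ∩ Y).Nonempty ∨
    (∃ a b, IsGap X a b ∧ y1 < a ∧ a < y2 ∧ y2 < b ∧ b - a < x2 - x1) ∨
    (∃ e f, IsGap Y e f ∧ e < x1 ∧ x1 < f ∧ f < x2 ∧ f - e < y2 - y1) := by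
  set c1 := sInf (rightTargets X x2 (x2 - x1)) with hc1def
  set d2 := sSup (leftTargets Y y1 (y2 - y1)) with hd2def
  have hc1 : thickness X * (x2 - x1) ≤ c1 - x2 := NGL_thickness_right hX hgx
  have hd2 : thickness Y * (y2 - y1) ≤ y1 - d2 := NGL_thickness_left hY hgy
  by_cases hc : y2 ≤ c1
  · by_cases hy2 : y2 ∈ X
    · exact Or.inl ⟨y2, hy2, hgy.2.2.1⟩
    · have hsX : sSup X ∈ rightTargets X x2 (x2 - x1) := NGL_sSup_mem_rightTargets hX hgx
      have hys : y2 ≤ sSup X :=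
        le_trans hc (csInf_le (NGL_rightTargets_bddBelow X x2 (x2 - x1)) hsX)
      have hys' : y2 < sSup X :=
        lt_of_le_of_ne hys (by intro h; exact hy2 (h ▸ hX.2.1.sSup_mem hX.1))
      have hiy : sInf X < y2 :=
        lt_of_le_of_lt (csInf_le hX.2.1.bddBelow hgx.2.1) (by linarith)
      obtain ⟨a, b, hg', ha, hb⟩ := NGL_mem_gap_of_not_mem hX hy2 hiy hys'
      have hax2 : x2 ≤ a := by
        by_contra h
        push_neg at h
        rcases le_or_gt a x1 with h' | h'
        · exact (Set.eq_empty_iff_forall_notMem.1 hg'.2.2.2) x2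
            ⟨⟨h, by linarith⟩, hgx.2.2.1⟩
        · exact (Set.eq_empty_iff_forall_notMem.1 hgx.2.2.2) a ⟨⟨h', h⟩, hg'.2.1⟩
      have hax2' : x2 < a := by
        rcases eq_or_lt_of_le hax2 with h | h
        · exact absurd (h ▸ hg') (fun hg'' => NGL_gap_not_adjacent hX hgx hg'')
        · exact h
      have hsmall : b - a < x2 - x1 := by
        by_contra h
        push_neg at h
        have hmem : a ∈ rightTargets X x2 (x2 - x1) := ⟨hax2', Or.inl ⟨b, hg', h⟩⟩
        have := csInf_le (NGL_rightTargets_bddBelow X x2 (x2 - x1)) hmem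
        linarith
      exact Or.inr (Or.inl ⟨a, b, hg', by linarith, ha, hb, hsmall⟩)
  · by_cases hd : d2 ≤ x1
    · by_cases hx1 : x1 ∈ Y
      · exact Or.inl ⟨x1, hgx.2.1, hx1⟩
      · have hiY : sInf Y ≤ d2 :=
          le_csSup (NGL_leftTargets_bddAbove Y y1 (y2 - y1)) (NGL_sInf_mem_leftTargets hY hgy)
        have hiY' : sInf Y < x1 :=
          lt_of_le_of_ne (le_trans hiY hd) (by intro h; exact hx1 (h ▸ hY.2.1.sInf_mem hY.1))
        have hx1s : x1 < sSup Y := lt_of_lt_of_le o1 (le_csSup hY.2.1.bddAbove hgy.2.1)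
        obtain ⟨e, f, hg', he, hf⟩ := NGL_mem_gap_of_not_mem hY hx1 hiY' hx1s
        have hfy1 : f ≤ y1 := by
          by_contra h
          push_neg at h
          exact (Set.eq_empty_iff_forall_notMem.1 hg'.2.2.2) y1
            ⟨⟨by linarith, h⟩, hgy.2.1⟩
        have hfy1' : f < y1 := by
          rcases eq_or_lt_of_le hfy1 with h | h
          · exact absurd (h ▸ hg') (fun hg'' => NGL_gap_not_adjacent hY hg'' hgy)
          · exact h
        have hsmall : f - e < y2 - y1 := by
          by_contra h
          push_neg at h
          have hmem : f ∈ leftTargets Y y1 (y2 - y1) := ⟨hfy1', Or.inl ⟨e, hg', h⟩⟩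
          have := le_csSup (NGL_leftTargets_bddAbove Y y1 (y2 - y1)) hmem
          linarith
        exact Or.inr (Or.inr ⟨e, f, hg', he, hf, by linarith, hsmall⟩)
    · exfalso
      push_neg at hc hd
      have hx : 0 < x2 - x1 := sub_pos.2 hgx.1
      have hy : 0 < y2 - y1 := sub_pos.2 hgy.1
      have h1 : thickness X * (x2 - x1) < y2 - y1 := by linarith
      have h2 : thickness Y * (y2 - y1) < x2 - x1 := by linarith
      have hτX := NGL_thickness_nonneg hX
      have hτY := NGL_thickness_nonneg hY
      have hY0 : 0 < thickness Y := by
        by_contra h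
        push_neg at h
        have : thickness X * thickness Y ≤ 0 := mul_nonpos_of_nonneg_of_nonpos hτX h
        linarith
      have key := mul_lt_mul_of_pos_left h1 hY0
      have h3 : x2 - x1 ≤ thickness X * thickness Y * (x2 - x1) :=
        le_mul_of_one_le_left hx.le hτ
      nlinarith [key, h2, h3]

/-- Linked pairs of gaps. -/
def GoodPair (K1 K2 : Set ℝ) (p q : ℝ × ℝ) : Prop :=
  IsGap K1 p.1 p.2 ∧ IsGap K2 q.1 q.2 ∧
    ((p.1 < q.1 ∧ q.1 < p.2 ∧ p.2 < q.2) ∨ (q.1 < p.1 ∧ p.1 < q.2 ∧ q.2 < p.2))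

lemma NGL_step_pair {K1 K2 : Set ℝ} (h1 : IsCantorSet K1) (h2 : IsCantorSet K2)
    (hτ : 1 ≤ thickness K1 * thickness K2) (hdisj : K1 ∩ K2 = ∅)
    {p q : ℝ × ℝ} (h : GoodPair K1 K2 p q) :
    ∃ p' q' : ℝ × ℝ, GoodPair K1 K2 p' q' ∧ p'.2 - p'.1 ≤ p.2 - p.1 ∧
      q'.2 - q'.1 ≤ q.2 - q.1 ∧
      (p'.2 - p'.1 < p.2 - p.1 ∨ q'.2 - q'.1 < q.2 - q.1) := by
  obtain ⟨hp, hq, hor | hor⟩ := h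
  · rcases NGL_step h1 h2 hτ hp hq hor.1 hor.2.1 hor.2.2 with hint | ⟨a, b, hg, ha1, ha2, hb, hs⟩ | ⟨e, f, hg, he, hf1, hf2, hs⟩
    · exact absurd hint (by rw [hdisj]; exact Set.not_nonempty_empty)
    · exact ⟨(a, b), q, ⟨hg, hq, Or.inr ⟨ha1, ha2, hb⟩⟩, hs.le, le_rfl, Or.inl hs⟩
    · exact ⟨p, (e, f), ⟨hp, hg, Or.inr ⟨he, hf1, hf2⟩⟩, le_rfl, hs.le, Or.inr hs⟩
  · have hτ' : 1 ≤ thickness K2 * thickness K1 := by rwa [mul_comm]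
    rcases NGL_step h2 h1 hτ' hq hp hor.1 hor.2.1 hor.2.2 with hint | ⟨a, b, hg, ha1, ha2, hb, hs⟩ | ⟨e, f, hg, he, hf1, hf2, hs⟩
    · exact absurd hint (by rw [Set.inter_comm, hdisj]; exact Set.not_nonempty_empty)
    · exact ⟨p, (a, b), ⟨hp, hg, Or.inl ⟨ha1, ha2, hb⟩⟩, le_rfl, hs.le, Or.inr hs⟩
    · exact ⟨(e, f), q, ⟨hg, hq, Or.inl ⟨he, hf1, hf2⟩⟩, hs.le, le_rfl, Or.inl hs⟩

/-- Gaps with strictly decreasing lengths have lengths tending to zero. -/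
lemma NGL_gaps_strictAnti_tendsto (hK : IsCantorSet K) (a b : ℕ → ℝ)
    (hg : ∀ n, IsGap K (a n) (b n))
    (hs : StrictAnti (fun n => b n - a n)) :
    Filter.Tendsto (fun n => b n - a n) Filter.atTop (nhds 0) := by
  set l : ℕ → ℝ := fun n => b n - a n with hldef
  have hpos : ∀ n, 0 < l n := fun n => sub_pos.2 (hg n).1
  have hbdd : BddBelow (Set.range l) := ⟨0, by rintro x ⟨n, rfl⟩; exact (hpos n).le⟩
  have hten : Filter.Tendsto l Filter.atTop (nhds (⨅ n, l n)) :=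
    tendsto_atTop_ciInf hs.antitone hbdd
  suffices h : (⨅ n, l n) = 0 by rwa [h] at hten
  set L := ⨅ n, l n with hLdef
  have hL0 : 0 ≤ L := le_ciInf fun n => (hpos n).le
  rcases eq_or_lt_of_le hL0 with h | h
  · exact h.symm
  exfalso
  have hLle : ∀ n, L ≤ l n := fun n => ciInf_le hbdd n
  have hsep : ∀ m n, m < n → L ≤ |a m - a n| := by
    intro m n hmn
    have hne : l n < l m := hs hmn
    rcases lt_trichotomy (a m) (a n) with hh | hh | hh
    · have hle := NGL_gap_le (hg m) (hg n) hh
      calc L ≤ l m := hLle m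
        _ ≤ a n - a m := by simp only [hldef]; linarith
        _ ≤ |a n - a m| := le_abs_self _
        _ = |a m - a n| := abs_sub_comm _ _
    · exfalso
      have : b m = b n := NGL_gap_right_unique (hg m) (hh ▸ hg n)
      have : l m = l n := by simp only [hldef, hh, this]
      linarith
    · have hle := NGL_gap_le (hg n) (hg m) hh
      calc L ≤ l n := hLle n
        _ ≤ a m - a n := by simp only [hldef]; linarith
        _ ≤ |a m - a n| := le_abs_self _
  obtain ⟨x, -, φ, hφ, hconv⟩ :=
    tendsto_subseq_of_bounded hK.2.1.isBounded (fun n => (hg n).2.1)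
  have hcauchy := hconv.cauchySeq
  rw [Metric.cauchySeq_iff] at hcauchy
  obtain ⟨N, hN⟩ := hcauchy L h
  have hd := hN N le_rfl (N + 1) (Nat.le_succ N)
  rw [Function.comp_apply, Function.comp_apply, Real.dist_eq] at hd
  have := hsep (φ N) (φ (N + 1)) (hφ (Nat.lt_succ_self N))
  linarith

lemma NGL_tendsto_of_infinite_strict (hK : IsCantorSet K) (a b : ℕ → ℝ)
    (hg : ∀ n, IsGap K (a n) (b n))
    (hanti : Antitone (fun n => b n - a n))
    (hinf : {n | b (n + 1) - a (n + 1) < b n - a n}.Infinite) :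
    Filter.Tendsto (fun n => b n - a n) Filter.atTop (nhds 0) := by
  set l : ℕ → ℝ := fun n => b n - a n with hldef
  set p : ℕ → Prop := fun n => b (n + 1) - a (n + 1) < b n - a n with hpdef
  have hinf' : (setOf p).Infinite := hinf
  set t : ℕ → ℕ := Nat.nth p with htdef
  have htmono : StrictMono t := Nat.nth_strictMono hinf'
  have hstrict : StrictAnti (fun n => b (t n) - a (t n)) := by
    intro m n hmn
    have h1 : t m + 1 ≤ t n := htmono hmn
    have h2 : p (t m) := Nat.nth_mem_of_infinite hinf' m
    calc b (t n) - a (t n) ≤ b (t m + 1) - a (t m + 1) := hanti h1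
      _ < b (t m) - a (t m) := h2
  have hsub : Filter.Tendsto (fun n => b (t n) - a (t n)) Filter.atTop (nhds 0) :=
    NGL_gaps_strictAnti_tendsto hK (fun n => a (t n)) (fun n => b (t n))
      (fun n => hg (t n)) hstrict
  have hpos : ∀ n, 0 < l n := fun n => sub_pos.2 (hg n).1
  have hbdd : BddBelow (Set.range l) := ⟨0, by rintro x ⟨n, rfl⟩; exact (hpos n).le⟩
  have hten : Filter.Tendsto l Filter.atTop (nhds (⨅ n, l n)) :=
    tendsto_atTop_ciInf hanti hbdd
  have hle : (⨅ n, l n) ≤ 0 :=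
    ge_of_tendsto' hsub (fun k => ciInf_le hbdd (t k))
  have hge : 0 ≤ ⨅ n, l n := le_ciInf fun n => (hpos n).le
  have : (⨅ n, l n) = 0 := le_antisymm hle hge
  rwa [this] at hten

lemma NGL_final {K1 K2 : Set ℝ} (h1 : IsCantorSet K1) (h2 : IsCantorSet K2)
    (l z y : ℕ → ℝ) (hz : ∀ n, z n ∈ K1) (hy : ∀ n, y n ∈ K2)
    (hd : ∀ n, |z n - y n| ≤ l n)
    (hl : Filter.Tendsto l Filter.atTop (nhds 0)) : (K1 ∩ K2).Nonempty := by
  obtain ⟨x, hx, φ, hφ, hconv⟩ := h1.2.1.tendsto_subseq hz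
  have hdiff : Filter.Tendsto (fun n => y (φ n) - z (φ n)) Filter.atTop (nhds 0) := by
    apply squeeze_zero_norm (a := fun n => l (φ n))
    · intro n
      rw [Real.norm_eq_abs, abs_sub_comm]
      exact hd (φ n)
    · exact hl.comp hφ.tendsto_atTop
  have hyconv : Filter.Tendsto (fun n => y (φ n)) Filter.atTop (nhds x) := by
    have := hconv.add hdiff
    simp only [Function.comp_apply, add_zero] at this ⊢
    convert this using 2 with n
    ring
  have hx2 : x ∈ K2 :=
    h2.2.1.isClosed.mem_of_tendsto hyconv (Filter.Eventually.of_forall fun n => hy (φ n))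
  exact ⟨x, hx, hx2⟩

lemma NGL_no_good_pair {K1 K2 : Set ℝ} (h1 : IsCantorSet K1) (h2 : IsCantorSet K2)
    (hτ : 1 ≤ thickness K1 * thickness K2) (hdisj : K1 ∩ K2 = ∅)
    {p0 q0 : ℝ × ℝ} (h0 : GoodPair K1 K2 p0 q0) : False := by
  have hstep : ∀ s : (ℝ × ℝ) × (ℝ × ℝ), ∃ t : (ℝ × ℝ) × (ℝ × ℝ),
      GoodPair K1 K2 s.1 s.2 →
      GoodPair K1 K2 t.1 t.2 ∧ t.1.2 - t.1.1 ≤ s.1.2 - s.1.1 ∧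
        t.2.2 - t.2.1 ≤ s.2.2 - s.2.1 ∧
        (t.1.2 - t.1.1 < s.1.2 - s.1.1 ∨ t.2.2 - t.2.1 < s.2.2 - s.2.1) := by
    intro s
    by_cases h : GoodPair K1 K2 s.1 s.2
    · obtain ⟨p', q', h'⟩ := NGL_step_pair h1 h2 hτ hdisj h
      exact ⟨(p', q'), fun _ => h'⟩
    · exact ⟨s, fun h' => absurd h' h⟩
  choose next hnext using hstep
  set s : ℕ → (ℝ × ℝ) × (ℝ × ℝ) := fun n => next^[n] (p0, q0) with hs
  have hss : ∀ n, s (n + 1) = next (s n) := fun n => Function.iterate_succ_apply' next n _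
  have hgood : ∀ n, GoodPair K1 K2 (s n).1 (s n).2 := by
    intro n
    induction n with
    | zero => exact h0
    | succ n ih =>
      rw [hss n]
      exact (hnext (s n) ih).1
  set l1 : ℕ → ℝ := fun n => (s n).1.2 - (s n).1.1 with hl1
  set l2 : ℕ → ℝ := fun n => (s n).2.2 - (s n).2.1 with hl2
  have hdec : ∀ n, l1 (n + 1) ≤ l1 n ∧ l2 (n + 1) ≤ l2 n ∧
      (l1 (n + 1) < l1 n ∨ l2 (n + 1) < l2 n) := by
    intro n
    have h := hnext (s n) (hgood n)
    simp only [hl1, hl2, hss n]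
    exact ⟨h.2.1, h.2.2.1, h.2.2.2⟩
  have ha1 : Antitone l1 := antitone_nat_of_succ_le fun n => (hdec n).1
  have ha2 : Antitone l2 := antitone_nat_of_succ_le fun n => (hdec n).2.1
  have hA1 : ∀ n, ∃ z ∈ K1, ∃ y ∈ K2, |z - y| ≤ l1 n := by
    intro n
    obtain ⟨hp, hq, hor | hor⟩ := hgood n
    · exact ⟨(s n).1.1, hp.2.1, (s n).2.1, hq.2.1,
        abs_le.2 ⟨by simp only [hl1]; linarith [hor.1, hor.2.1, hor.2.2],
          by simp only [hl1]; linarith [hor.1, hor.2.1, hor.2.2]⟩⟩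
    · exact ⟨(s n).1.2, hp.2.2.1, (s n).2.2, hq.2.2.1,
        abs_le.2 ⟨by simp only [hl1]; linarith [hor.1, hor.2.1, hor.2.2],
          by simp only [hl1]; linarith [hor.1, hor.2.1, hor.2.2]⟩⟩
  have hA2 : ∀ n, ∃ z ∈ K1, ∃ y ∈ K2, |z - y| ≤ l2 n := by
    intro n
    obtain ⟨hp, hq, hor | hor⟩ := hgood n
    · exact ⟨(s n).1.2, hp.2.2.1, (s n).2.1, hq.2.1,
        abs_le.2 ⟨by simp only [hl2]; linarith [hor.1, hor.2.1, hor.2.2],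
          by simp only [hl2]; linarith [hor.1, hor.2.1, hor.2.2]⟩⟩
    · exact ⟨(s n).1.1, hp.2.1, (s n).2.1, hq.2.1,
        abs_le.2 ⟨by simp only [hl2]; linarith [hor.1, hor.2.1, hor.2.2],
          by simp only [hl2]; linarith [hor.1, hor.2.1, hor.2.2]⟩⟩
  have hinf : {n | l1 (n + 1) < l1 n}.Infinite ∨ {n | l2 (n + 1) < l2 n}.Infinite := by
    by_contra hcon
    push_neg at hcon
    have huniv : ({n | l1 (n + 1) < l1 n} ∪ {n | l2 (n + 1) < l2 n}) = Set.univ := by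
      ext n
      simp only [Set.mem_union, Set.mem_setOf_eq, Set.mem_univ, iff_true]
      exact (hdec n).2.2
    have hfin := hcon.1.union hcon.2
    rw [huniv] at hfin
    exact Set.infinite_univ hfin
  have hkey : Filter.Tendsto l1 Filter.atTop (nhds 0) ∨
      Filter.Tendsto l2 Filter.atTop (nhds 0) := by
    rcases hinf with hi | hi
    · exact Or.inl (NGL_tendsto_of_infinite_strict h1 (fun n => (s n).1.1)
        (fun n => (s n).1.2) (fun n => (hgood n).1) ha1 hi)
    · exact Or.inr (NGL_tendsto_of_infinite_strict h2 (fun n => (s n).2.1)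
        (fun n => (s n).2.2) (fun n => (hgood n).2.1) ha2 hi)
  rcases hkey with hk | hk
  · choose z hz y hy hd using hA1
    have := NGL_final h1 h2 l1 z y hz hy hd hk
    rw [hdisj] at this
    exact Set.not_nonempty_empty this
  · choose z hz y hy hd using hA2
    have := NGL_final h1 h2 l2 z y hz hy hd hk
    rw [hdisj] at this
    exact Set.not_nonempty_empty this

lemma NGL_initial (hX : IsCantorSet X) (hY : IsCantorSet Y)
    (hdisj : ∀ t ∈ X, t ∉ Y)
    (h1 : sInf X < sInf Y) (h2 : sInf Y < sSup X) (h3 : sSup X < sSup Y) :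
    ∃ a b v1 v2, IsGap X a b ∧ IsGap Y v1 v2 ∧ a < v1 ∧ v1 < b ∧ b < v2 := by
  have hiY : sInf Y ∈ Y := hY.2.1.sInf_mem hY.1
  have hiYX : sInf Y ∉ X := fun h => hdisj _ h hiY
  obtain ⟨a, b, hab, ha, hb⟩ := NGL_mem_gap_of_not_mem hX hiYX h1 h2
  have hbY : b ∉ Y := hdisj b hab.2.2.1
  have hbs : b < sSup Y := lt_of_le_of_lt (le_csSup hX.2.1.bddAbove hab.2.2.1) h3
  have hbi : sInf Y < b := hb
  obtain ⟨v1, v2, hv, hv1, hv2⟩ := NGL_mem_gap_of_not_mem hY hbY hbi hbs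
  have hav1 : a < v1 := lt_of_lt_of_le ha (csInf_le hY.2.1.bddBelow hv.2.1)
  exact ⟨a, b, v1, v2, hab, hv, hav1, hv1, hv2⟩

end NGLaux


/-- the Newhouse gap lemma for linked Cantor sets. -/
theorem newhouse_gap_lemma (K1 K2 : Set ℝ) (h1 : IsCantorSet K1) (h2 : IsCantorSet K2)
    (hlink : Linked K1 K2) (hτ : 1 ≤ thickness K1 * thickness K2) :
    (K1 ∩ K2).Nonempty := by
  by_contra hne
  have hdisjE : K1 ∩ K2 = ∅ := Set.not_nonempty_iff_eq_empty.1 hne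
  have hd12 : ∀ x ∈ K1, x ∉ K2 := by
    intro x hx hx2
    rw [Set.eq_empty_iff_forall_notMem] at hdisjE
    exact hdisjE x ⟨hx, hx2⟩
  have hd21 : ∀ x ∈ K2, x ∉ K1 := fun x hx hx1 => hd12 x hx1 hx
  obtain ⟨⟨t, ht1, ht2⟩, hn1, hn2⟩ := hlink
  have hi1s1 : sInf K1 < sSup K1 := NGL_sInf_lt_sSup h1
  have hi2s2 : sInf K2 < sSup K2 := NGL_sInf_lt_sSup h2
  rw [Set.Ioo_subset_Ioo_iff hi1s1] at hn1
  rw [Set.Ioo_subset_Ioo_iff hi2s2] at hn2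
  push_neg at hn1 hn2
  rcases lt_trichotomy (sInf K1) (sInf K2) with hlt | heq | hgt
  · have hs12 : sSup K1 < sSup K2 := hn2 hlt.le
    have hmid : sInf K2 < sSup K1 := lt_of_le_of_lt ht2.1.le ht1.2
    obtain ⟨a, b, v1, v2, hab, hv, hav1, hv1, hv2⟩ :=
      NGL_initial h1 h2 hd12 hlt hmid hs12
    exact NGL_no_good_pair h1 h2 hτ hdisjE
      (p0 := (a, b)) (q0 := (v1, v2)) ⟨hab, hv, Or.inl ⟨hav1, hv1, hv2⟩⟩
  · have ha := hn1 heq.ge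
    have hb := hn2 heq.le
    linarith
  · have hs21 : sSup K2 < sSup K1 := hn1 hgt.le
    have hmid : sInf K1 < sSup K2 := lt_of_le_of_lt ht1.1.le ht2.2
    obtain ⟨a, b, v1, v2, hab, hv, hav1, hv1, hv2⟩ :=
      NGL_initial h2 h1 hd21 hgt hmid hs21
    have hτ' : 1 ≤ thickness K1 * thickness K2 := hτ
    exact NGL_no_good_pair h1 h2 hτ' hdisjE
      (p0 := (v1, v2)) (q0 := (a, b)) ⟨hv, hab, Or.inr ⟨hav1, hv1, hv2⟩⟩
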